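/- Let (X, ‖·‖) be a complex normed space and x, y ∈ X with x, y ≠ 0. Then there exists φ ∈ [0, 2π] such that ⟨e^{i·φ}·x | y⟩ is a real number; consequently the angle ∠(e^{i·φ}·x, y) is pure real. -/

import Mathlib

/-- The real area hyperbolic cosine, `arcosh x = log (x + √(x² − 1))`. -/
noncomputable def arcosh (x : ℝ) : ℝ := Real.log (x + Real.sqrt (x ^ 2 - 1))

/-- `G₋ = √((r²+s²−1)² + 4s²) − (r²+s²)` for `z = r + i·s`. -/
noncomputable def Gminus (z : ℂ) : ℝ :=
  Real.sqrt ((z.re ^ 2 + z.im ^ 2 - 1) ^ 2 + 4 * z.im ^ 2) - (z.re ^ 2 + z.im ^ 2)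

/-- `G₊ = √((r²+s²−1)² + 4s²) + (r²+s²)` for `z = r + i·s`. -/
noncomputable def Gplus (z : ℂ) : ℝ :=
  Real.sqrt ((z.re ^ 2 + z.im ^ 2 - 1) ^ 2 + 4 * z.im ^ 2) + (z.re ^ 2 + z.im ^ 2)

/-- The complex arcsine: `arcsin(r+is) = ½·(sgn r · arccos G₋ + i · sgn s · arcosh G₊)`. -/
noncomputable def carcsin (z : ℂ) : ℂ :=
  (1 / 2 : ℂ) *
    (((Real.sign z.re * Real.arccos (Gminus z) : ℝ) : ℂ) +
      Complex.I * ((Real.sign z.im * arcosh (Gplus z) : ℝ) : ℂ))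

/-- The complex arccosine: `arccos z = π/2 − arcsin z`. -/
noncomputable def carccos (z : ℂ) : ℂ := ((Real.pi / 2 : ℝ) : ℂ) - carcsin z
/-- The continuous product `⟨x|y⟩` in a complex normed space. -/
noncomputable def cprod {X : Type*} [NormedAddCommGroup X] [NormedSpace ℂ X] (x y : X) : ℂ :=
  open scoped Classical in
  if x = 0 ∨ y = 0 then 0
  else
    ((‖x‖ * ‖y‖ : ℝ) : ℂ) * (1 / 4 : ℂ) *
      (((‖((‖x‖⁻¹ : ℝ) : ℂ) • x + ((‖y‖⁻¹ : ℝ) : ℂ) • y‖ ^ 2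
          - ‖((‖x‖⁻¹ : ℝ) : ℂ) • x - ((‖y‖⁻¹ : ℝ) : ℂ) • y‖ ^ 2 : ℝ) : ℂ)
        + Complex.I *
          ((‖((‖x‖⁻¹ : ℝ) : ℂ) • x + Complex.I • (((‖y‖⁻¹ : ℝ) : ℂ) • y)‖ ^ 2
            - ‖((‖x‖⁻¹ : ℝ) : ℂ) • x - Complex.I • (((‖y‖⁻¹ : ℝ) : ℂ) • y)‖ ^ 2 : ℝ) : ℂ))
/-- The complex angle `∠(x,y) = arccos(⟨x|y⟩ / (‖x‖·‖y‖))`. -/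
noncomputable def cangle {X : Type*} [NormedAddCommGroup X] [NormedSpace ℂ X] (x y : X) : ℂ :=
  carccos (cprod x y / ((‖x‖ * ‖y‖ : ℝ) : ℂ))


lemma cprod_ne {X : Type*} [NormedAddCommGroup X] [NormedSpace ℂ X] (x y : X)
    (hx : x ≠ 0) (hy : y ≠ 0) :
    cprod x y =
    ((‖x‖ * ‖y‖ : ℝ) : ℂ) * (1 / 4 : ℂ) *
      (((‖((‖x‖⁻¹ : ℝ) : ℂ) • x + ((‖y‖⁻¹ : ℝ) : ℂ) • y‖ ^ 2
          - ‖((‖x‖⁻¹ : ℝ) : ℂ) • x - ((‖y‖⁻¹ : ℝ) : ℂ) • y‖ ^ 2 : ℝ) : ℂ)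
        + Complex.I *
          ((‖((‖x‖⁻¹ : ℝ) : ℂ) • x + Complex.I • (((‖y‖⁻¹ : ℝ) : ℂ) • y)‖ ^ 2
            - ‖((‖x‖⁻¹ : ℝ) : ℂ) • x - Complex.I • (((‖y‖⁻¹ : ℝ) : ℂ) • y)‖ ^ 2 : ℝ) : ℂ)) := by
  unfold cprod
  rw [if_neg (by simp [hx, hy])]

lemma cprod_neg_left {X : Type*} [NormedAddCommGroup X] [NormedSpace ℂ X] (x y : X)
    (hx : x ≠ 0) (hy : y ≠ 0) :
    cprod (-x) y = - cprod x y := by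
  rw [cprod_ne _ _ (neg_ne_zero.mpr hx) hy, cprod_ne _ _ hx hy]
  simp only [norm_neg, smul_neg]
  simp only [show ∀ a b : X, -a + b = -(a - b) from fun a b => by abel,
      show ∀ a b : X, -a - b = -(a + b) from fun a b => by abel, norm_neg]
  push_cast
  ring

lemma carccos_im_eq_zero (z : ℂ) (h : z.im = 0) : (carccos z).im = 0 := by
  simp [carccos, carcsin, h, Complex.sub_im, Complex.add_im, Complex.mul_im]

/-- for `x, y ≠ 0` there is `φ ∈ [0, 2π]` such that `⟨e^{iφ}·x | y⟩` is real,
and hence the angle `∠(e^{iφ}·x, y)` is pure real. -/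
theorem stmt15 {X : Type*} [NormedAddCommGroup X] [NormedSpace ℂ X] (x y : X)
    (hx : x ≠ 0) (hy : y ≠ 0) :
    ∃ φ ∈ Set.Icc (0 : ℝ) (2 * Real.pi),
      (cprod (Complex.exp (Complex.I * (φ : ℂ)) • x) y).im = 0 ∧
      (cangle (Complex.exp (Complex.I * (φ : ℂ)) • x) y).im = 0 := by
  set g : ℝ → ℝ := fun φ => (cprod (Complex.exp (Complex.I * (φ : ℂ)) • x) y).im with hg
  have hxne : ∀ φ : ℝ, Complex.exp (Complex.I * (φ : ℂ)) • x ≠ 0 := fun φ =>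
    smul_ne_zero (Complex.exp_ne_zero _) hx
  have hn : ∀ φ : ℝ, ‖Complex.exp (Complex.I * (φ : ℂ)) • x‖ = ‖x‖ := by
    intro φ
    rw [norm_smul, mul_comm Complex.I,
      Complex.norm_exp_ofReal_mul_I, one_mul]
  have hcont : Continuous g := by
    have hc : Continuous fun φ : ℝ => cprod (Complex.exp (Complex.I * (φ : ℂ)) • x) y := by
      have : (fun φ : ℝ => cprod (Complex.exp (Complex.I * (φ : ℂ)) • x) y) =
          fun φ : ℝ =>
          ((‖x‖ * ‖y‖ : ℝ) : ℂ) * (1 / 4 : ℂ) *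
            (((‖((‖x‖⁻¹ : ℝ) : ℂ) • (Complex.exp (Complex.I * (φ : ℂ)) • x)
                  + ((‖y‖⁻¹ : ℝ) : ℂ) • y‖ ^ 2
                - ‖((‖x‖⁻¹ : ℝ) : ℂ) • (Complex.exp (Complex.I * (φ : ℂ)) • x)
                  - ((‖y‖⁻¹ : ℝ) : ℂ) • y‖ ^ 2 : ℝ) : ℂ)
              + Complex.I *
                ((‖((‖x‖⁻¹ : ℝ) : ℂ) • (Complex.exp (Complex.I * (φ : ℂ)) • x)
                    + Complex.I • (((‖y‖⁻¹ : ℝ) : ℂ) • y)‖ ^ 2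
                  - ‖((‖x‖⁻¹ : ℝ) : ℂ) • (Complex.exp (Complex.I * (φ : ℂ)) • x)
                    - Complex.I • (((‖y‖⁻¹ : ℝ) : ℂ) • y)‖ ^ 2 : ℝ) : ℂ)) := by
        funext φ
        rw [cprod_ne _ _ (hxne φ) hy, hn φ]
      rw [this]
      have he : Continuous fun φ : ℝ => Complex.exp (Complex.I * (φ : ℂ)) • x :=
        (Complex.continuous_exp.comp (continuous_const.mul Complex.continuous_ofReal)).smul
          continuous_const
      fun_prop
    exact (Complex.continuous_im.comp hc)
  have hanti : g Real.pi = - g 0 := by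
    have h0 : Complex.exp (Complex.I * ((0 : ℝ) : ℂ)) • x = x := by
      norm_num
    have hpi : Complex.exp (Complex.I * ((Real.pi : ℝ) : ℂ)) • x = -x := by
      rw [mul_comm, Complex.exp_pi_mul_I, neg_one_smul]
    simp only [hg, h0, hpi]
    rw [cprod_neg_left _ _ hx hy, Complex.neg_im]
  have hexists : ∃ φ ∈ Set.Icc (0 : ℝ) Real.pi, g φ = 0 := by
    rcases le_total (g 0) 0 with h0 | h0
    · have : (0 : ℝ) ∈ Set.Icc (g 0) (g Real.pi) := ⟨h0, by rw [hanti]; linarith⟩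
      obtain ⟨φ, hφ, hgφ⟩ := intermediate_value_Icc Real.pi_pos.le hcont.continuousOn this
      exact ⟨φ, hφ, hgφ⟩
    · have : (0 : ℝ) ∈ Set.Icc (g Real.pi) (g 0) := ⟨by rw [hanti]; linarith, h0⟩
      obtain ⟨φ, hφ, hgφ⟩ := intermediate_value_Icc' Real.pi_pos.le hcont.continuousOn this
      exact ⟨φ, hφ, hgφ⟩
  obtain ⟨φ, hφ, hgφ⟩ := hexists
  refine ⟨φ, ⟨hφ.1, hφ.2.trans (by linarith [Real.pi_pos])⟩, hgφ, ?_⟩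
  apply carccos_im_eq_zero
  have hz : (cprod (Complex.exp (Complex.I * (φ : ℂ)) • x) y).im = 0 := hgφ
  rw [Complex.div_im]
  simp [hz]
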